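/- Let d ≥ 1, j ≥ 1 an integer, μ > 1, and z, z′ ∈ ℂᵈ with |z − z′| ≥ 2. Let η be a C¹ function supported in [−1,−1/4] ∪ [1/4,1] with |η| ≤ 1 and |η′| ≤ 1, and let φ(t) = t + (|z−z′|²/4)·cot t + (1/2)Im(z·z̄′). Then |∫ η(2ʲt) e^{iμφ(t)} dt| ≤ C·min{(μ·2^{2j})^{−1}, 2^{−j}} with C independent of z, z′, j, μ. -/

import Mathlib

open Real Complex Set

noncomputable def oijPhi (a b t : ℝ) : ℝ := t + a * (Real.cos t / Real.sin t) + b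
noncomputable def oijPhi1 (a t : ℝ) : ℝ := 1 - a / Real.sin t ^ 2
noncomputable def oijPhi2 (a t : ℝ) : ℝ := 2 * a * Real.cos t / Real.sin t ^ 3

lemma oij_hasDerivAt_phi (a b t : ℝ) (hs : Real.sin t ≠ 0) :
    HasDerivAt (oijPhi a b) (oijPhi1 a t) t := by
  have h1 : HasDerivAt (fun t => Real.cos t / Real.sin t)
      ((-Real.sin t * Real.sin t - Real.cos t * Real.cos t) / Real.sin t ^ 2) t :=
    (Real.hasDerivAt_cos t).div (Real.hasDerivAt_sin t) hs
  have h2 : HasDerivAt (fun t => t + a * (Real.cos t / Real.sin t) + b)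
      (1 + a * ((-Real.sin t * Real.sin t - Real.cos t * Real.cos t) / Real.sin t ^ 2)) t :=
    ((hasDerivAt_id t).add (h1.const_mul a)).add_const b
  have h3 : -Real.sin t * Real.sin t - Real.cos t * Real.cos t = -1 := by
    nlinarith [Real.sin_sq_add_cos_sq t]
  convert h2 using 1
  · rfl
  unfold oijPhi1
  rw [h3]
  field_simp
  ring

lemma oij_hasDerivAt_phi1 (a t : ℝ) (hs : Real.sin t ≠ 0) :
    HasDerivAt (oijPhi1 a) (oijPhi2 a t) t := by
  have hsq : HasDerivAt (fun t => Real.sin t ^ 2) (2 * Real.sin t * Real.cos t) t := by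
    exact ((Real.hasDerivAt_sin t).pow 2).congr_deriv (by norm_num)
  have hsne : Real.sin t ^ 2 ≠ 0 := pow_ne_zero _ hs
  have h2 : HasDerivAt (fun t => 1 - a / Real.sin t ^ 2)
      (-((0 * Real.sin t ^ 2 - a * (2 * Real.sin t * Real.cos t)) / (Real.sin t ^ 2) ^ 2)) t :=
    ((hasDerivAt_const t a).div hsq hsne).const_sub 1
  convert h2 using 1
  · rfl
  unfold oijPhi2
  field_simp
  ring

lemma oij_aux (μ a b : ℝ) (hμ : 1 < μ) (ha : 1 ≤ a) (j : ℕ) (hj : 1 ≤ j)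
    (g g' : ℝ → ℂ) (hgd : ∀ t, HasDerivAt g (g' t) t) (hg'c : Continuous g')
    (hg1 : ∀ t, ‖g t‖ ≤ 1) (hg'1 : ∀ t, ‖g' t‖ ≤ (2:ℝ) ^ j)
    (p q : ℝ) (hpq : p ≤ q) (hlen : q - p ≤ 9/8 * ((2:ℝ) ^ j)⁻¹)
    (hgp : g p = 0) (hgq : g q = 0)
    (hsin : ∀ t ∈ Icc p q, Real.sin t ≠ 0)
    (hsb : ∀ t ∈ Icc p q, |Real.sin t| ≤ 9/8 * ((2:ℝ) ^ j)⁻¹) :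
    ‖∫ t in p..q, g t * Complex.exp (Complex.I * ((μ * oijPhi a b t : ℝ) : ℂ))‖
      ≤ 8 * (μ * (4:ℝ) ^ j)⁻¹ := by
  have hμ0 : (0:ℝ) < μ := by linarith
  have h2jpos : (0:ℝ) < 2 ^ j := by positivity
  set ε : ℝ := 9/8 * ((2:ℝ) ^ j)⁻¹ with hε_def
  have hε0 : 0 < ε := by positivity
  have h2inv : ((2:ℝ) ^ j)⁻¹ ≤ 2⁻¹ := by
    apply inv_anti₀ (by norm_num)
    calc (2:ℝ) = 2 ^ 1 := (pow_one 2).symm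
    _ ≤ 2 ^ j := pow_le_pow_right₀ (by norm_num) hj
  have hεle : ε ≤ 9/16 := by rw [hε_def]; nlinarith
  have h98 : (2:ℝ) ^ j * ε = 9/8 := by
    rw [hε_def]
    field_simp
  clear_value ε
  have hgc : Continuous g := by
    have : Differentiable ℝ g := fun t => (hgd t).differentiableAt
    exact this.continuous
  set E : ℝ → ℂ := fun t => Complex.exp (Complex.I * ((μ * oijPhi a b t : ℝ) : ℂ)) with hE_def
  set den : ℝ → ℂ := fun t => Complex.I * (μ:ℝ) * ((oijPhi1 a t : ℝ) : ℂ) with hden_def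
  set X : ℝ → ℂ := fun t => Complex.I * (μ:ℝ) * ((oijPhi2 a t : ℝ) : ℂ) with hX_def
  set F' : ℝ → ℂ := fun t => (g' t * den t - g t * X t) / den t ^ 2 with hF'_def
  clear_value E den X F'
  -- basic per-point facts
  have hfacts : ∀ t ∈ Icc p q, 0 < Real.sin t ^ 2 ∧ Real.sin t ^ 2 ≤ ε ^ 2 ∧
      3 * Real.sin t ^ 2 ≤ a ∧ oijPhi1 a t < 0 := by
    intro t ht
    have hs := hsin t ht
    have hsa := hsb t ht
    have h1 : 0 < Real.sin t ^ 2 := by positivity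
    have h2 : Real.sin t ^ 2 ≤ ε ^ 2 := by
      rw [← _root_.sq_abs]
      exact pow_le_pow_left₀ (abs_nonneg _) hsa 2
    have h3 : 3 * Real.sin t ^ 2 ≤ a := by nlinarith
    refine ⟨h1, h2, h3, ?_⟩
    unfold oijPhi1
    rw [sub_neg, lt_div_iff₀ h1]
    linarith
  have hphi1ne : ∀ t ∈ Icc p q, oijPhi1 a t ≠ 0 := fun t ht => ne_of_lt (hfacts t ht).2.2.2
  have hdenne : ∀ t ∈ Icc p q, den t ≠ 0 := by
    intro t ht
    rw [hden_def]
    exact mul_ne_zero (mul_ne_zero Complex.I_ne_zero (by exact_mod_cast ne_of_gt hμ0))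
      (Complex.ofReal_ne_zero.mpr (hphi1ne t ht))
  -- norms
  have hnormIμ : ∀ r : ℝ, ‖Complex.I * (μ:ℝ) * (r:ℂ)‖ = μ * |r| := by
    intro r
    simp [map_mul, abs_of_pos hμ0]
  have hEnorm : ∀ t, ‖E t‖ = 1 := by
    intro t
    rw [hE_def]
    simp [Complex.norm_exp, Complex.mul_re]
  have habs1 : ∀ t ∈ Icc p q, |oijPhi1 a t| = (a - Real.sin t ^ 2) / Real.sin t ^ 2 := by
    intro t ht
    obtain ⟨h1, h2, h3, h4⟩ := hfacts t ht
    rw [abs_of_neg h4]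
    unfold oijPhi1
    rw [neg_sub, sub_div, div_self h1.ne']
  -- derivative of G = (g/den) * E
  have hder : ∀ t ∈ Icc p q, HasDerivAt (fun t => g t / den t * E t) (g t * E t + F' t * E t) t := by
    intro t ht
    have hs := hsin t ht
    have hdne := hdenne t ht
    have hd1 : HasDerivAt den (X t) t := by
      simp only [hden_def, hX_def]
      exact ((oij_hasDerivAt_phi1 a t hs).ofReal_comp).const_mul (Complex.I * (μ:ℝ))
    have hdF : HasDerivAt (fun y => g y / den y) (F' t) t := by
      simp only [hF'_def]
      exact (hgd t).div hd1 hdne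
    have h0 : HasDerivAt (fun y => Complex.I * ((μ * oijPhi a b y : ℝ) : ℂ))
        (Complex.I * ((μ * oijPhi1 a t : ℝ) : ℂ)) t :=
      (((oij_hasDerivAt_phi a b t hs).const_mul μ).ofReal_comp).const_mul Complex.I
    have hdE : HasDerivAt E (den t * E t) t := by
      have h1 := h0.cexp
      rw [hE_def]
      convert h1 using 1
      simp only [hden_def]
      push_cast
      ring
    have hcomb := hdF.mul hdE
    convert hcomb using 1
    · rfl
    · rfl
    simp only [hF'_def]
    field_simp
    ring
  -- continuity
  have hsinC : ContinuousOn Real.sin (Icc p q) := Real.continuous_sin.continuousOn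
  have hφcont : ContinuousOn (fun t => oijPhi a b t) (Icc p q) := by
    unfold oijPhi
    exact (continuousOn_id.add (continuousOn_const.mul
      (Real.continuous_cos.continuousOn.div hsinC hsin))).add continuousOn_const
  have hφ1cont : ContinuousOn (fun t => oijPhi1 a t) (Icc p q) := by
    unfold oijPhi1
    exact continuousOn_const.sub (continuousOn_const.div (hsinC.pow 2)
      (fun t ht => pow_ne_zero 2 (hsin t ht)))
  have hφ2cont : ContinuousOn (fun t => oijPhi2 a t) (Icc p q) := by
    unfold oijPhi2
    exact (continuousOn_const.mul Real.continuous_cos.continuousOn).div (hsinC.pow 3)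
      (fun t ht => pow_ne_zero 3 (hsin t ht))
  have hEcont : ContinuousOn E (Icc p q) := by
    rw [hE_def]
    exact Complex.continuous_exp.comp_continuousOn (continuousOn_const.mul
      (Complex.continuous_ofReal.comp_continuousOn (continuousOn_const.mul hφcont)))
  have hdencont : ContinuousOn den (Icc p q) := by
    rw [hden_def]
    exact continuousOn_const.mul (Complex.continuous_ofReal.comp_continuousOn hφ1cont)
  have hXcont : ContinuousOn X (Icc p q) := by
    rw [hX_def]
    exact continuousOn_const.mul (Complex.continuous_ofReal.comp_continuousOn hφ2cont)
  have hF'cont : ContinuousOn F' (Icc p q) := by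
    rw [hF'_def]
    exact ((hg'c.continuousOn.mul hdencont).sub (hgc.continuousOn.mul hXcont)).div
      (hdencont.pow 2) (fun t ht => pow_ne_zero 2 (hdenne t ht))
  have hint1 : IntervalIntegrable (fun t => g t * E t) MeasureTheory.volume p q :=
    (hgc.continuousOn.mul hEcont).intervalIntegrable_of_Icc hpq
  have hint2 : IntervalIntegrable (fun t => F' t * E t) MeasureTheory.volume p q :=
    (hF'cont.mul hEcont).intervalIntegrable_of_Icc hpq
  have hFTC : ∫ t in p..q, (g t * E t + F' t * E t) = g q / den q * E q - g p / den p * E p :=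
    intervalIntegral.integral_eq_sub_of_hasDerivAt
      (fun t ht => hder t (by rwa [uIcc_of_le hpq] at ht)) (hint1.add hint2)
  rw [intervalIntegral.integral_add hint1 hint2, hgp, hgq] at hFTC
  simp only [zero_div, zero_mul, sub_zero, sub_self] at hFTC
  have hkey : ∫ t in p..q, g t * E t = - ∫ t in p..q, F' t * E t :=
    eq_neg_of_add_eq_zero_left hFTC
  -- pointwise bound
  have hptbd : ∀ t ∈ Set.uIoc p q, ‖F' t * E t‖ ≤ 99/16 * ε / μ := by
    intro t ht'
    have ht : t ∈ Icc p q := Ioc_subset_Icc_self (by rwa [uIoc_of_le hpq] at ht')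
    obtain ⟨h1, h2, h3, h4⟩ := hfacts t ht
    have hs := hsin t ht
    have hsa := hsb t ht
    have hdne := hdenne t ht
    have hsapos : 0 < |Real.sin t| := abs_pos.mpr hs
    have hamin : 2/3 ≤ a - Real.sin t ^ 2 := by linarith only [h3, ha]
    rw [norm_mul, hEnorm, mul_one]
    have hsplit : F' t = g' t / den t - g t * X t / den t ^ 2 := by
      simp only [hF'_def]
      field_simp
    rw [hsplit]
    refine le_trans (norm_sub_le _ _) ?_
    have hdnorm : ‖den t‖ = μ * ((a - Real.sin t ^ 2) / Real.sin t ^ 2) := by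
      simp only [hden_def]
      rw [hnormIμ, habs1 t ht]
    have hdpos : 0 < μ * ((a - Real.sin t ^ 2) / Real.sin t ^ 2) :=
      mul_pos hμ0 (div_pos (by linarith) h1)
    have hB1 : ‖g' t / den t‖ ≤ 27/16 * ε / μ := by
      rw [norm_div, hdnorm, div_le_iff₀ hdpos]
      have e0 : 27/16 * ε / μ * (μ * ((a - Real.sin t ^ 2) / Real.sin t ^ 2))
          = 27/16 * ε * (a - Real.sin t ^ 2) / Real.sin t ^ 2 := by
        field_simp
      rw [e0, le_div_iff₀ h1]
      have e1 : ‖g' t‖ * Real.sin t ^ 2 ≤ 2 ^ j * Real.sin t ^ 2 :=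
        mul_le_mul_of_nonneg_right (hg'1 t) h1.le
      have e2 : (2:ℝ) ^ j * Real.sin t ^ 2 ≤ 2 ^ j * ε ^ 2 :=
        mul_le_mul_of_nonneg_left h2 h2jpos.le
      have e3 : (2:ℝ) ^ j * ε ^ 2 = 9/8 * ε := by
        linear_combination ε * h98
      have e4 : 9/8 * ε ≤ 27/16 * ε * (a - Real.sin t ^ 2) := by
        linarith only [mul_nonneg hε0.le
          (show (0:ℝ) ≤ a - Real.sin t ^ 2 - 2/3 by linarith only [hamin])]
      linarith only [e1, e2, e3, e4]
    have hB2 : ‖g t * X t / den t ^ 2‖ ≤ 9/2 * ε / μ := by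
      rw [norm_div, norm_mul, _root_.norm_pow, hdnorm]
      have hXnorm : ‖X t‖ = μ * |oijPhi2 a t| := by
        simp only [hX_def]
        exact hnormIμ _
      rw [hXnorm]
      have hφ2bd : |oijPhi2 a t| ≤ 2 * a / |Real.sin t| ^ 3 := by
        unfold oijPhi2
        rw [abs_div, _root_.abs_pow]
        refine (div_le_div_iff_of_pos_right (pow_pos hsapos 3)).mpr ?_
        calc |2 * a * Real.cos t| = 2 * a * |Real.cos t| := by
              rw [_root_.abs_mul, _root_.abs_of_nonneg (show (0:ℝ) ≤ 2 * a by linarith only [ha])]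
        _ ≤ 2 * a * 1 :=
              mul_le_mul_of_nonneg_left (Real.abs_cos_le_one t) (by linarith only [ha])
        _ = 2 * a := by ring
      have hDpos : 0 < (μ * ((a - Real.sin t ^ 2) / Real.sin t ^ 2)) ^ 2 := pow_pos hdpos 2
      have hnum_le : ‖g t‖ * (μ * |oijPhi2 a t|) ≤ μ * (2 * a / |Real.sin t| ^ 3) := by
        calc ‖g t‖ * (μ * |oijPhi2 a t|) ≤ 1 * (μ * (2 * a / |Real.sin t| ^ 3)) := by
              refine mul_le_mul (hg1 t) (mul_le_mul_of_nonneg_left hφ2bd hμ0.le)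
                (by positivity) (by norm_num)
        _ = μ * (2 * a / |Real.sin t| ^ 3) := one_mul _
      refine le_trans ((div_le_div_iff_of_pos_right hDpos).mpr hnum_le) ?_
      rw [div_le_div_iff₀ hDpos hμ0]
      have hcore : 2 * a * |Real.sin t| ≤ 9/2 * ε * (a - Real.sin t ^ 2) ^ 2 := by
        have h23 : 2/3 * a ≤ a - Real.sin t ^ 2 := by linarith only [h3]
        have hsq2 : (2/3 * a) ^ 2 ≤ (a - Real.sin t ^ 2) ^ 2 :=
          pow_le_pow_left₀ (by linarith only [ha]) h23 2
        have h2a : 2 * a ≤ 9/2 * (a - Real.sin t ^ 2) ^ 2 := by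
          nlinarith only [hsq2, ha]
        have hint1 : 2 * a * |Real.sin t| ≤ 2 * a * ε :=
          mul_le_mul_of_nonneg_left hsa (by linarith only [ha])
        have hint2 : 2 * a * ε ≤ 9/2 * (a - Real.sin t ^ 2) ^ 2 * ε :=
          mul_le_mul_of_nonneg_right h2a hε0.le
        linarith only [hint1, hint2]
      have hexp : 9/2 * ε * (μ * ((a - Real.sin t ^ 2) / Real.sin t ^ 2)) ^ 2
          = μ ^ 2 * (9/2 * ε * (a - Real.sin t ^ 2) ^ 2) / (Real.sin t ^ 2) ^ 2 := by
        field_simp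
      rw [hexp]
      have hLHS : μ * (2 * a / |Real.sin t| ^ 3) * μ = μ ^ 2 * (2 * a) / |Real.sin t| ^ 3 := by
        ring
      rw [hLHS, div_le_div_iff₀ (by positivity) (by positivity)]
      have hpow : (Real.sin t ^ 2) ^ 2 = |Real.sin t| * |Real.sin t| ^ 3 := by
        rw [← _root_.sq_abs (Real.sin t)]
        ring
      have bighint := mul_le_mul_of_nonneg_left
        (mul_le_mul_of_nonneg_right hcore (pow_nonneg (abs_nonneg (Real.sin t)) 3))
        (sq_nonneg μ)
      have hpow2 : μ ^ 2 * (2 * a) * (Real.sin t ^ 2) ^ 2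
          = μ ^ 2 * (2 * a) * (|Real.sin t| * |Real.sin t| ^ 3) := by rw [hpow]
      linarith only [bighint, hpow2]
    calc ‖g' t / den t‖ + ‖g t * X t / den t ^ 2‖ ≤ 27/16 * ε / μ + 9/2 * ε / μ :=
          add_le_add hB1 hB2
    _ = 99/16 * ε / μ := by ring
  have hbound := intervalIntegral.norm_integral_le_of_norm_le_const hptbd
  have hgoaleq : (∫ t in p..q, g t * Complex.exp (Complex.I * ((μ * oijPhi a b t : ℝ) : ℂ)))
      = ∫ t in p..q, g t * E t := by
    rw [hE_def]
  rw [hgoaleq, hkey, norm_neg]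
  refine le_trans hbound ?_
  rw [_root_.abs_of_nonneg (sub_nonneg.mpr hpq)]
  have h4pos : (0:ℝ) < 4 ^ j := by positivity
  have h4j : ((2:ℝ) ^ j) ^ 2 = 4 ^ j := by
    rw [← pow_mul, mul_comm, pow_mul]
    norm_num
  have hε2 : ε ^ 2 * (4:ℝ) ^ j = 81/64 := by
    rw [hε_def, mul_pow, inv_pow, h4j]
    field_simp
    ring
  have hstep : 99/16 * ε / μ * (q - p) ≤ 99/16 * ε ^ 2 / μ := by
    have h0 : 0 ≤ 99/16 * ε / μ := by positivity
    have h1 := mul_le_mul_of_nonneg_left hlen h0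
    calc 99/16 * ε / μ * (q - p) ≤ 99/16 * ε / μ * ε := h1
    _ = 99/16 * ε ^ 2 / μ := by ring
  refine le_trans hstep ?_
  rw [show (8:ℝ) * (μ * 4 ^ j)⁻¹ = 8 / (μ * 4 ^ j) from by rw [div_eq_mul_inv]]
  rw [div_le_div_iff₀ hμ0 (by positivity)]
  have hq2 : μ * (ε ^ 2 * 4 ^ j) = μ * (81/64) := by rw [hε2]
  linarith only [hq2, hμ0]

/-- For `d ≥ 1`, `j ≥ 1`, `μ > 1` and `z, z′ ∈ ℂᵈ` with
`‖z − z′‖ ≥ 2`, and `η` a `C¹` function supported in `[−1,−1/4] ∪ [1/4,1]`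
with `|η| ≤ 1`, `|η′| ≤ 1`, the oscillatory integral with phase
`φ(t) = t + (‖z−z′‖²/4) cot t + (1/2) Im(z·z̄′)` satisfies
`|∫ η(2ʲ t) e^{iμφ(t)} dt| ≤ C min{(μ 2^{2j})⁻¹, 2⁻ʲ}`, with `C` independent
of `z, z′, j, μ`. -/
theorem oscillatory_integral_Ij_far (d : ℕ) (hd : 1 ≤ d) :
    ∃ C : ℝ, 0 < C ∧
      ∀ (j : ℕ), 1 ≤ j → ∀ (μ : ℝ), 1 < μ →
      ∀ (z z' : EuclideanSpace ℂ (Fin d)), 2 ≤ ‖z - z'‖ →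
      ∀ (η : ℝ → ℂ), ContDiff ℝ 1 η →
        (Function.support η ⊆ Set.Icc (-1) (-1/4) ∪ Set.Icc (1/4) 1) →
        (∀ t, ‖η t‖ ≤ 1) → (∀ t, ‖deriv η t‖ ≤ 1) →
        ‖∫ t : ℝ, η ((2:ℝ) ^ j * t) *
            Complex.exp (Complex.I * (μ * (t + (‖z - z'‖ ^ 2 / 4) * (Real.cos t / Real.sin t)
              + (1 / 2) * (∑ i : Fin d, z i * (starRingEnd ℂ) (z' i)).im)))‖
          ≤ C * min ((μ * (2:ℝ) ^ (2 * j))⁻¹) (((2:ℝ) ^ j)⁻¹) := by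
  refine ⟨16, by norm_num, ?_⟩
  intro j hj μ hμ z z' hzz η hη hsupp hη1 hη'1
  have hμ0 : (0:ℝ) < μ := by linarith
  have h2jpos : (0:ℝ) < (2:ℝ) ^ j := by positivity
  set a : ℝ := ‖z - z'‖ ^ 2 / 4 with ha_def
  set b : ℝ := (∑ i : Fin d, z i * (starRingEnd ℂ) (z' i)).im / 2 with hb_def
  have ha : 1 ≤ a := by rw [ha_def]; nlinarith [hzz]
  set c : ℝ := ((2:ℝ) ^ j)⁻¹ with hc_def
  have hc : 0 < c := by rw [hc_def]; positivity
  have hc1 : (2:ℝ) ^ j * c = 1 := by rw [hc_def]; exact mul_inv_cancel₀ (ne_of_gt h2jpos)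
  have hcle : c ≤ 1/2 := by
    rw [hc_def]
    have : (2:ℝ) ≤ 2 ^ j := by
      calc (2:ℝ) = 2 ^ 1 := (pow_one 2).symm
      _ ≤ 2 ^ j := pow_le_pow_right₀ (by norm_num) hj
    rw [show (1:ℝ)/2 = 2⁻¹ by norm_num]
    exact inv_anti₀ (by norm_num) this
  have hval : ∀ x : ℝ, x ∉ (Icc (-1:ℝ) (-1/4) ∪ Icc (1/4) 1) → η x = 0 := by
    intro x hx
    by_contra h
    exact hx (hsupp h)
  set g : ℝ → ℂ := fun t => η ((2:ℝ) ^ j * t) with hg_def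
  set g' : ℝ → ℂ := fun t => ((2:ℝ) ^ j) • deriv η ((2:ℝ) ^ j * t) with hg'_def
  have hgd : ∀ t, HasDerivAt g (g' t) t := by
    intro t
    have h1 : HasDerivAt η (deriv η ((2:ℝ) ^ j * t)) ((2:ℝ) ^ j * t) :=
      ((hη.differentiable one_ne_zero) _).hasDerivAt
    have h2 : HasDerivAt (fun t : ℝ => (2:ℝ) ^ j * t) ((2:ℝ) ^ j) t := by
      simpa using (hasDerivAt_id t).const_mul ((2:ℝ) ^ j)
    have h3 := h1.scomp t h2
    exact h3
  have hg'c : Continuous g' := by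
    rw [hg'_def]
    exact (((hη.continuous_deriv le_rfl).comp
      (continuous_mul_left ((2:ℝ) ^ j)))).const_smul ((2:ℝ) ^ j)
  have hg1 : ∀ t, ‖g t‖ ≤ 1 := fun t => hη1 _
  have hg'1 : ∀ t, ‖g' t‖ ≤ (2:ℝ) ^ j := by
    intro t
    simp only [hg'_def]
    rw [norm_smul, Real.norm_eq_abs, abs_of_pos h2jpos]
    calc (2:ℝ) ^ j * ‖deriv η ((2:ℝ) ^ j * t)‖ ≤ (2:ℝ) ^ j * 1 :=
          mul_le_mul_of_nonneg_left (hη'1 _) h2jpos.le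
    _ = (2:ℝ) ^ j := mul_one _
  have hgval : ∀ u : ℝ, ((2:ℝ) ^ j * u) ∉ Icc (-1:ℝ) (-1/4) ∪ Icc (1/4) 1 → g u = 0 := by
    intro u hu
    simp only [hg_def]
    exact hval _ hu
  have hct : ∀ t : ℝ, t = c * ((2:ℝ) ^ j * t) := by
    intro t
    rw [hc_def]
    field_simp
  -- endpoint values
  have hmem18 : (1/8 : ℝ) ∉ Icc (-1:ℝ) (-1/4) ∪ Icc (1/4) 1 := by
    simp only [Set.mem_union, Set.mem_Icc]
    push_neg
    norm_num
  have hmem98 : (9/8 : ℝ) ∉ Icc (-1:ℝ) (-1/4) ∪ Icc (1/4) 1 := by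
    simp only [Set.mem_union, Set.mem_Icc]
    push_neg
    norm_num
  have hmemn18 : (-(1/8) : ℝ) ∉ Icc (-1:ℝ) (-1/4) ∪ Icc (1/4) 1 := by
    simp only [Set.mem_union, Set.mem_Icc]
    push_neg
    norm_num
  have hmemn98 : (-(9/8) : ℝ) ∉ Icc (-1:ℝ) (-1/4) ∪ Icc (1/4) 1 := by
    simp only [Set.mem_union, Set.mem_Icc]
    push_neg
    norm_num
  have hgp2 : g (c/8) = 0 := by
    apply hgval
    rw [show (2:ℝ) ^ j * (c/8) = ((2:ℝ) ^ j * c)/8 by ring, hc1]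
    simpa using hmem18
  have hgq2 : g (9/8*c) = 0 := by
    apply hgval
    rw [show (2:ℝ) ^ j * (9/8*c) = 9/8 * ((2:ℝ) ^ j * c) by ring, hc1]
    simpa using hmem98
  have hgp1 : g (-(9/8*c)) = 0 := by
    apply hgval
    rw [show (2:ℝ) ^ j * (-(9/8*c)) = -(9/8 * ((2:ℝ) ^ j * c)) by ring, hc1]
    simpa using hmemn98
  have hgq1 : g (-(c/8)) = 0 := by
    apply hgval
    rw [show (2:ℝ) ^ j * (-(c/8)) = -(((2:ℝ) ^ j * c)/8) by ring, hc1]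
    simpa using hmemn18
  -- sine facts
  have hπ : (3:ℝ) < Real.pi := Real.pi_gt_three
  have hsinpos : ∀ t ∈ Icc (c/8) (9/8*c), Real.sin t ≠ 0 ∧ |Real.sin t| ≤ 9/8*c := by
    intro t ht
    obtain ⟨h1, h2⟩ := ht
    have ht0 : 0 < t := lt_of_lt_of_le (by positivity) h1
    have htle : t ≤ 9/16 := le_trans h2 (by nlinarith [hcle, hc])
    have hsin : 0 < Real.sin t := Real.sin_pos_of_pos_of_lt_pi ht0 (by linarith)
    refine ⟨ne_of_gt hsin, ?_⟩
    have hlt := Real.sin_lt ht0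
    rw [_root_.abs_of_pos hsin]
    linarith
  have hsinneg : ∀ t ∈ Icc (-(9/8*c)) (-(c/8)), Real.sin t ≠ 0 ∧ |Real.sin t| ≤ 9/8*c := by
    intro t ht
    obtain ⟨h1, h2⟩ := ht
    have ht0 : t < 0 := lt_of_le_of_lt h2 (by linarith [hc])
    have htge : -(9/16) ≤ t := le_trans (by nlinarith [hcle, hc]) h1
    have hsin : Real.sin t < 0 := Real.sin_neg_of_neg_of_neg_pi_lt ht0 (by linarith)
    refine ⟨ne_of_lt hsin, ?_⟩
    have hlt := Real.lt_sin ht0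
    rw [_root_.abs_of_neg hsin]
    linarith
  -- rewrite integrand
  have hfun : (fun t : ℝ => η ((2:ℝ) ^ j * t) *
        Complex.exp (Complex.I * (μ * (t + (‖z - z'‖ ^ 2 / 4) * (Real.cos t / Real.sin t)
          + (1 / 2) * (∑ i : Fin d, z i * (starRingEnd ℂ) (z' i)).im))))
      = fun t => g t * Complex.exp (Complex.I * ((μ * oijPhi a b t : ℝ) : ℂ)) := by
    funext t
    simp only [hg_def]
    congr 1
    unfold oijPhi
    rw [ha_def, hb_def]
    push_cast
    ring
  rw [hfun]
  set ψ : ℝ → ℂ := fun t => g t * Complex.exp (Complex.I * ((μ * oijPhi a b t : ℝ) : ℂ))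
    with hψ_def
  -- vanishing off the two intervals
  have hcompl : ∀ t, t ∉ (Icc (-(9/8*c)) (-(c/8)) ∪ Icc (c/8) (9/8*c)) → ψ t = 0 := by
    intro t ht
    have hg0 : g t = 0 := by
      apply hgval
      intro hmem
      apply ht
      have he := hct t
      rcases hmem with hm | hm
      · rw [Set.mem_Icc] at hm
        obtain ⟨hm1, hm2⟩ := hm
        have h' := mul_le_mul_of_nonneg_left hm1 hc.le
        have h'' := mul_le_mul_of_nonneg_left hm2 hc.le
        left
        rw [Set.mem_Icc]
        exact ⟨by linarith only [h', he, hc], by linarith only [h'', he, hc]⟩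
      · rw [Set.mem_Icc] at hm
        obtain ⟨hm1, hm2⟩ := hm
        have h' := mul_le_mul_of_nonneg_left hm1 hc.le
        have h'' := mul_le_mul_of_nonneg_left hm2 hc.le
        right
        rw [Set.mem_Icc]
        exact ⟨by linarith only [h', he, hc], by linarith only [h'', he, hc]⟩
    simp only [hψ_def]
    rw [hg0, zero_mul]
  have hgc : Continuous g := by
    rw [hg_def]
    exact hη.continuous.comp (continuous_const.mul continuous_id)
  have hcontOn : ∀ (s : Set ℝ), (∀ t ∈ s, Real.sin t ≠ 0) → ContinuousOn ψ s := by
    intro s hs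
    simp only [hψ_def]
    refine hgc.continuousOn.mul ?_
    refine Complex.continuous_exp.comp_continuousOn ?_
    refine continuousOn_const.mul (Complex.continuous_ofReal.comp_continuousOn ?_)
    refine continuousOn_const.mul ?_
    unfold oijPhi
    exact (continuousOn_id.add (continuousOn_const.mul
      (Real.continuous_cos.continuousOn.div Real.continuous_sin.continuousOn hs))).add
      continuousOn_const
  have hIntOn1 : MeasureTheory.IntegrableOn ψ (Icc (-(9/8*c)) (-(c/8))) :=
    (hcontOn _ (fun t ht => (hsinneg t ht).1)).integrableOn_Icc
  have hIntOn2 : MeasureTheory.IntegrableOn ψ (Icc (c/8) (9/8*c)) :=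
    (hcontOn _ (fun t ht => (hsinpos t ht).1)).integrableOn_Icc
  have hdisj : Disjoint (Icc (-(9/8*c)) (-(c/8))) (Icc (c/8) (9/8*c)) := by
    rw [Set.disjoint_left]
    intro x hx1 hx2
    rw [Set.mem_Icc] at hx1 hx2
    linarith [hx1.2, hx2.1, hc]
  have hsplit : (∫ t, ψ t) = (∫ t in Icc (-(9/8*c)) (-(c/8)), ψ t)
      + ∫ t in Icc (c/8) (9/8*c), ψ t := by
    rw [← MeasureTheory.setIntegral_union hdisj measurableSet_Icc hIntOn1 hIntOn2]
    exact (MeasureTheory.setIntegral_eq_integral_of_forall_compl_eq_zero hcompl).symm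
  have hle1 : -(9/8*c) ≤ -(c/8) := by linarith [hc]
  have hle2 : c/8 ≤ 9/8*c := by linarith [hc]
  have hIcc1 : (∫ t in Icc (-(9/8*c)) (-(c/8)), ψ t) = ∫ t in (-(9/8*c))..(-(c/8)), ψ t := by
    rw [MeasureTheory.integral_Icc_eq_integral_Ioc, intervalIntegral.integral_of_le hle1]
  have hIcc2 : (∫ t in Icc (c/8) (9/8*c), ψ t) = ∫ t in (c/8)..(9/8*c), ψ t := by
    rw [MeasureTheory.integral_Icc_eq_integral_Ioc, intervalIntegral.integral_of_le hle2]
  have h98c : 9/8 * ((2:ℝ) ^ j)⁻¹ = 9/8*c := by rw [hc_def]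
  have hbd1 : ‖∫ t in (-(9/8*c))..(-(c/8)), ψ t‖ ≤ 8 * (μ * (4:ℝ) ^ j)⁻¹ := by
    simp only [hψ_def]
    refine oij_aux μ a b hμ ha j hj g g' hgd hg'c hg1 hg'1 _ _ hle1 ?_ hgp1 hgq1
      (fun t ht => (hsinneg t ht).1) (fun t ht => by rw [h98c]; exact (hsinneg t ht).2)
    rw [h98c]
    linarith [hc]
  have hbd2 : ‖∫ t in (c/8)..(9/8*c), ψ t‖ ≤ 8 * (μ * (4:ℝ) ^ j)⁻¹ := by
    simp only [hψ_def]
    refine oij_aux μ a b hμ ha j hj g g' hgd hg'c hg1 hg'1 _ _ hle2 ?_ hgp2 hgq2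
      (fun t ht => (hsinpos t ht).1) (fun t ht => by rw [h98c]; exact (hsinpos t ht).2)
    rw [h98c]
    linarith [hc]
  have hmin : min ((μ * (2:ℝ) ^ (2 * j))⁻¹) c = (μ * (4:ℝ) ^ j)⁻¹ := by
    have h24 : (2:ℝ) ^ (2 * j) = (4:ℝ) ^ j := by
      rw [pow_mul]
      norm_num
    rw [h24]
    apply min_eq_left
    rw [hc_def]
    apply inv_anti₀ h2jpos
    have h1 : (2:ℝ) ^ j ≤ (4:ℝ) ^ j := by
      apply pow_le_pow_left₀ (by norm_num) (by norm_num)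
    calc (2:ℝ) ^ j ≤ (4:ℝ) ^ j := h1
    _ = 1 * (4:ℝ) ^ j := (one_mul _).symm
    _ ≤ μ * (4:ℝ) ^ j := mul_le_mul_of_nonneg_right (le_of_lt hμ) (by positivity)
  rw [hsplit, hIcc1, hIcc2, hmin]
  calc ‖(∫ t in (-(9/8*c))..(-(c/8)), ψ t) + ∫ t in (c/8)..(9/8*c), ψ t‖
      ≤ ‖∫ t in (-(9/8*c))..(-(c/8)), ψ t‖ + ‖∫ t in (c/8)..(9/8*c), ψ t‖ := norm_add_le _ _
  _ ≤ 8 * (μ * (4:ℝ) ^ j)⁻¹ + 8 * (μ * (4:ℝ) ^ j)⁻¹ := add_le_add hbd1 hbd2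
  _ = 16 * (μ * (4:ℝ) ^ j)⁻¹ := by ring
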